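/- Let p be a prime with p ≡ 3 (mod 4), let k ≥ 1 be an odd integer, let q = pᵏ, and let 𝔽 = 𝔽_q. Then every polynomial R ∈ 𝔽[x] satisfying R(x)·(x² + 1) = 1 for all x ∈ 𝔽 has degree at least q − 1. -/

import Mathlib

/-- Lower bound showing dependence on the field size, over non-prime fields. -/
theorem statement8 (p k : ℕ) (hp : p.Prime) (hp4 : p % 4 = 3) (hk : Odd k) (hk1 : 1 ≤ k)
    {F : Type*} [Field F] [Fintype F] (hcard : Fintype.card F = p ^ k) :
    ∀ R : Polynomial F, (∀ x : F, R.eval x * (x ^ 2 + 1) = 1) →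
      p ^ k - 1 ≤ R.natDegree := by
  intro R hR
  classical
  by_contra hdeg
  push_neg at hdeg
  -- char ≠ 2, so (2 : F) ≠ 0
  have hq1 : 1 ≤ p ^ k := Nat.one_le_pow _ _ hp.pos
  have hpodd : p % 2 = 1 := by omega
  have hchar2 : ringChar F ≠ 2 := by
    intro h
    have := FiniteField.even_card_of_char_two h
    rw [hcard] at this
    have : p ^ k % 2 = 1 := Nat.odd_iff.mp ((Nat.odd_iff.mpr hpodd).pow)
    omega
  have h2 : (2 : F) ≠ 0 := Ring.two_ne_zero hchar2
  -- the sum of R over F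
  set S : F := ∑ x : F, R.eval x with hS
  -- S = 0 since deg R < q - 1
  have hS0 : S = 0 := by
    rw [hS]
    have : ∀ x : F, R.eval x = ∑ j ∈ Finset.range (R.natDegree + 1), R.coeff j * x ^ j := by
      intro x; exact Polynomial.eval_eq_sum_range (p := R) x
    simp_rw [this]
    rw [Finset.sum_comm]
    apply Finset.sum_eq_zero
    intro j hj
    rw [← Finset.mul_sum, FiniteField.sum_pow_lt_card_sub_one, mul_zero]
    rw [hcard]
    have := Finset.mem_range.mp hj
    omega
  -- but 2 * S = 1
  have hne : ∀ x : F, x ^ 2 + 1 ≠ 0 := by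
    intro x h
    have := hR x
    rw [h, mul_zero] at this
    exact one_ne_zero this.symm
  have heval : ∀ x : F, R.eval x = (x ^ 2 + 1)⁻¹ := by
    intro x
    exact eq_inv_of_mul_eq_one_left (by linear_combination hR x)
  have key : ∀ x : F, x ≠ 0 → R.eval x + R.eval x⁻¹ = 1 := by
    intro x hx
    rw [heval, heval]
    have h1 := hne x
    have h2 := hne x⁻¹
    field_simp
    field_simp at h1 h2
    rw [add_comm 1 (x ^ 2)]
    field_simp
    ring
  have hinv : S = ∑ x : F, R.eval x⁻¹ := by
    rw [hS]
    exact Fintype.sum_equiv ⟨Inv.inv, Inv.inv, inv_inv, inv_inv⟩ _ _ (fun x => by simp)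
  have h2S : S + S = 1 := by
    have : S + S = ∑ x : F, (R.eval x + R.eval x⁻¹) := by
      rw [Finset.sum_add_distrib, ← hS, ← hinv]
    rw [this]
    rw [← Finset.add_sum_erase _ _ (Finset.mem_univ (0 : F))]
    have e0 : R.eval (0:F) = 1 := by have := hR 0; simpa using this
    rw [Finset.sum_congr rfl (fun x hx => key x (Finset.ne_of_mem_erase hx))]
    simp only [e0, inv_zero, Finset.sum_const, nsmul_one]
    rw [Finset.card_erase_of_mem (Finset.mem_univ _), Finset.card_univ, hcard]
    have hc : ((p ^ k : ℕ) : F) = 0 := by rw [← hcard]; exact FiniteField.cast_card_eq_zero F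
    rw [Nat.cast_sub hq1, hc]
    ring
  rw [hS0] at h2S
  simpa using h2S
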